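/- arXiv:1301.7620 — 3 statements merged into one kernel-verified Lean document; each statement's English description precedes it below -/
import Mathlib

section
/- Let r ∈ (0,1], and let ψ: ℕ → (0,∞) be nonincreasing and such that there exists ε > 0 for which the sequence k^{r+ε}·ψ(k) is almost decreasing (i.e., there is a constant K₁ > 0 with k₁^{r+ε}ψ(k₁) ≤ K₁·k₂^{r+ε}ψ(k₂) for all k₁ > k₂ ≥ 1). Then there exists a constant K > 0, depending only on ψ and r, such that for every n ∈ ℕ: ψ(n)·n^r ≤ Σ_{k=n}^∞ Δψ(k)·k^r ≤ K·ψ(n)·n^r, where Δψ(k) = ψ(k) − ψ(k+1). -/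
open Real

/-- Bernoulli-type upper bound: `(x+1)^p ≤ x^p + p x^(p-1)` for `x ≥ 1`, `0 ≤ p ≤ 1`. -/
lemma bern_upper {x p : ℝ} (hx : 1 ≤ x) (hp0 : 0 ≤ p) (hp1 : p ≤ 1) :
    (x + 1) ^ p ≤ x ^ p + p * x ^ (p - 1) := by
  have hx0 : (0:ℝ) < x := lt_of_lt_of_le one_pos hx
  have h1 : (x + 1) ^ p = x ^ p * (1 + 1 / x) ^ p := by
    rw [← Real.mul_rpow hx0.le (by positivity)]
    congr 1
    field_simp
  have h2 : (1 + 1 / x) ^ p ≤ 1 + p * (1 / x) :=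
    rpow_one_add_le_one_add_mul_self (by have h := one_div_nonneg.mpr hx0.le; linarith) hp0 hp1
  have h3 : x ^ p * (1 + 1 / x) ^ p ≤ x ^ p * (1 + p * (1 / x)) :=
    mul_le_mul_of_nonneg_left h2 (Real.rpow_nonneg hx0.le p)
  have h4 : x ^ p * (1 + p * (1 / x)) = x ^ p + p * x ^ (p - 1) := by
    rw [Real.rpow_sub hx0, Real.rpow_one]
    field_simp
  rw [h1]; rw [h4] at h3; exact h3

/-- Bernoulli-type telescoping bound: `p (m+1)^(-1-p) ≤ m^(-p) - (m+1)^(-p)`. -/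
lemma bern_lower {m p : ℝ} (hm : 1 ≤ m) (hp0 : 0 < p) (hp1 : p ≤ 1) :
    p * (m + 1) ^ (-1 - p) ≤ m ^ (-p) - (m + 1) ^ (-p) := by
  have hm0 : (0:ℝ) < m := lt_of_lt_of_le one_pos hm
  have hb0 : (0:ℝ) < m + 1 := by linarith
  have hs : (-1:ℝ) ≤ -(1 / (m + 1)) := by
    have : 1 / (m + 1) ≤ 1 := by rw [div_le_one hb0]; linarith
    linarith
  have key := rpow_one_add_le_one_add_mul_self hs hp0.le hp1
  have e1 : 1 + -(1 / (m + 1)) = m / (m + 1) := by field_simp; ring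
  rw [e1] at key
  have e2 : m ^ (-p) * (m / (m + 1)) ^ p = (m + 1) ^ (-p) := by
    rw [Real.div_rpow hm0.le hb0.le, ← mul_div_assoc, ← Real.rpow_add hm0,
      neg_add_cancel, Real.rpow_zero, Real.rpow_neg hb0.le, one_div]
  have h5 : (m + 1) ^ (-p) ≤ m ^ (-p) - p * (m ^ (-p) / (m + 1)) := by
    have h := mul_le_mul_of_nonneg_left key (Real.rpow_nonneg hm0.le (-p))
    rw [e2] at h
    have e4 : m ^ (-p) * (1 + p * -(1 / (m + 1))) = m ^ (-p) - p * (m ^ (-p) / (m + 1)) := by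
      field_simp
      ring
    linarith [h.trans_eq e4]
  have h6 : (m + 1) ^ (-p) ≤ m ^ (-p) :=
    Real.rpow_le_rpow_of_nonpos hm0 (by linarith) (by linarith)
  have e3 : (m + 1) ^ (-1 - p) = (m + 1) ^ (-p) / (m + 1) := by
    have : (-1:ℝ) - p = -p + -1 := by ring
    rw [this, Real.rpow_add hb0, Real.rpow_neg_one, ← div_eq_mul_inv]
  rw [e3]
  calc p * ((m + 1) ^ (-p) / (m + 1)) ≤ p * (m ^ (-p) / (m + 1)) := by gcongr
    _ ≤ m ^ (-p) - (m + 1) ^ (-p) := by linarith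

/-- Lemma 1: Let `r ∈ (0,1]` and let `ψ : ℕ → (0,∞)` be nonincreasing such
that for some `ε > 0` the sequence `k^{r+ε}·ψ(k)` is almost decreasing.  Then there is a
constant `K > 0` (depending only on `ψ` and `r`) such that for every `n ≥ 1`
`ψ(n)·n^r ≤ Σ_{k=n}^∞ (ψ(k) − ψ(k+1))·k^r ≤ K·ψ(n)·n^r`. -/
theorem lemma1_sum_diff_bounds (r : ℝ) (hr0 : 0 < r) (hr1 : r ≤ 1)
    (ψ : ℕ → ℝ) (hpos : ∀ k : ℕ, 1 ≤ k → 0 < ψ k)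
    (hmono : ∀ k : ℕ, 1 ≤ k → ψ (k + 1) ≤ ψ k)
    (ε : ℝ) (hε : 0 < ε) (K₁ : ℝ) (hK₁ : 0 < K₁)
    (halm : ∀ k₁ k₂ : ℕ, 1 ≤ k₂ → k₂ < k₁ →
      (k₁ : ℝ) ^ (r + ε) * ψ k₁ ≤ K₁ * ((k₂ : ℝ) ^ (r + ε) * ψ k₂)) :
    ∃ K : ℝ, 0 < K ∧ ∀ n : ℕ, 1 ≤ n →
      Summable (fun k : ℕ => (ψ (n + k) - ψ (n + k + 1)) * ((n + k : ℕ) : ℝ) ^ r) ∧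
      ψ n * (n : ℝ) ^ r ≤ ∑' k : ℕ, (ψ (n + k) - ψ (n + k + 1)) * ((n + k : ℕ) : ℝ) ^ r ∧
      ∑' k : ℕ, (ψ (n + k) - ψ (n + k + 1)) * ((n + k : ℕ) : ℝ) ^ r ≤ K * (ψ n * (n : ℝ) ^ r) := by
  set ε' := min ε 1 with hε'def
  have hε'0 : 0 < ε' := lt_min hε one_pos
  have hε'1 : ε' ≤ 1 := min_le_right _ _
  have hε'ε : ε' ≤ ε := min_le_left _ _
  set C := max K₁ 1 with hCdef
  have hC1 : (1:ℝ) ≤ C := le_max_right _ _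
  have hC0 : (0:ℝ) < C := lt_of_lt_of_le one_pos hC1
  -- monotonicity of ψ on [1, ∞)
  have hmono' : ∀ m l : ℕ, 1 ≤ m → ψ (m + l) ≤ ψ m := by
    intro m l hm
    induction l with
    | zero => simp
    | succ l ih =>
      have h1 : ψ (m + l + 1) ≤ ψ (m + l) := hmono _ (le_trans hm (Nat.le_add_right _ _))
      calc ψ (m + (l + 1)) = ψ (m + l + 1) := by ring_nf
        _ ≤ ψ (m + l) := h1
        _ ≤ ψ m := ih
  -- almost decreasing with the smaller exponent ε' and constant C
  have halm' : ∀ k₁ k₂ : ℕ, 1 ≤ k₂ → k₂ < k₁ →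
      (k₁ : ℝ) ^ (r + ε') * ψ k₁ ≤ C * ((k₂ : ℝ) ^ (r + ε') * ψ k₂) := by
    intro k₁ k₂ h2 hlt
    have hk₂ : (1:ℝ) ≤ (k₂:ℝ) := by exact_mod_cast h2
    have hk₂0 : (0:ℝ) < (k₂:ℝ) := lt_of_lt_of_le one_pos hk₂
    have hltR : (k₂:ℝ) ≤ (k₁:ℝ) := by exact_mod_cast hlt.le
    have hk₁0 : (0:ℝ) < (k₁:ℝ) := lt_of_lt_of_le hk₂0 hltR
    have e1 : (k₁:ℝ) ^ (r + ε') * ψ k₁ = (k₁:ℝ) ^ (ε' - ε) * ((k₁:ℝ) ^ (r + ε) * ψ k₁) := by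
      rw [← mul_assoc, ← Real.rpow_add hk₁0]
      congr 2
      ring
    have e2 : (k₂:ℝ) ^ (ε' - ε) * (K₁ * ((k₂:ℝ) ^ (r + ε) * ψ k₂))
        = K₁ * ((k₂:ℝ) ^ (r + ε') * ψ k₂) := by
      rw [← mul_assoc, mul_comm ((k₂:ℝ) ^ (ε' - ε)) K₁, mul_assoc, ← mul_assoc ((k₂:ℝ) ^ (ε' - ε)),
        ← Real.rpow_add hk₂0]
      congr 3
      ring
    have hbase : (k₁:ℝ) ^ (ε' - ε) ≤ (k₂:ℝ) ^ (ε' - ε) :=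
      Real.rpow_le_rpow_of_nonpos hk₂0 hltR (by linarith)
    have hnn : (0:ℝ) ≤ (k₁:ℝ) ^ (r + ε) * ψ k₁ := by
      have := hpos k₁ (le_trans h2 hlt.le)
      positivity
    calc (k₁:ℝ) ^ (r + ε') * ψ k₁
        = (k₁:ℝ) ^ (ε' - ε) * ((k₁:ℝ) ^ (r + ε) * ψ k₁) := e1
      _ ≤ (k₂:ℝ) ^ (ε' - ε) * (K₁ * ((k₂:ℝ) ^ (r + ε) * ψ k₂)) := by
          apply mul_le_mul hbase (halm k₁ k₂ h2 hlt) hnn (Real.rpow_nonneg hk₂0.le _)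
      _ = K₁ * ((k₂:ℝ) ^ (r + ε') * ψ k₂) := e2
      _ ≤ C * ((k₂:ℝ) ^ (r + ε') * ψ k₂) := by
          have := hpos k₂ h2
          have h := Real.rpow_nonneg hk₂0.le (r + ε')
          apply mul_le_mul_of_nonneg_right (le_max_left _ _)
          positivity
  -- ψ tends to 0
  have hψ0 : Filter.Tendsto ψ Filter.atTop (nhds 0) := by
    have hub : ∀ m : ℕ, 2 ≤ m → ψ m ≤ (C * ψ 1) * (m:ℝ) ^ (-(r + ε')) := by
      intro m hm
      have h := halm' m 1 le_rfl (by omega)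
      have hm0 : (0:ℝ) < (m:ℝ) := by positivity
      have hm1 : (0:ℝ) < (m:ℝ) ^ (r + ε') := Real.rpow_pos_of_pos hm0 _
      simp only [Nat.cast_one, Real.one_rpow, one_mul] at h
      have : ψ m ≤ C * ψ 1 / (m:ℝ) ^ (r + ε') := by
        rw [le_div_iff₀ hm1]
        calc ψ m * (m:ℝ) ^ (r + ε') = (m:ℝ) ^ (r + ε') * ψ m := by ring
          _ ≤ C * ψ 1 := h
      calc ψ m ≤ C * ψ 1 / (m:ℝ) ^ (r + ε') := this
        _ = (C * ψ 1) * (m:ℝ) ^ (-(r + ε')) := by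
            rw [Real.rpow_neg hm0.le, div_eq_mul_inv]
    have htend : Filter.Tendsto (fun m : ℕ => (C * ψ 1) * (m:ℝ) ^ (-(r + ε')))
        Filter.atTop (nhds 0) := by
      have h1 : Filter.Tendsto (fun m : ℕ => (m:ℝ) ^ (-(r + ε'))) Filter.atTop (nhds 0) :=
        (tendsto_rpow_neg_atTop (by linarith)).comp tendsto_natCast_atTop_atTop
      have := h1.const_mul (C * ψ 1)
      simpa using this
    have hzero : Filter.Tendsto (fun _ : ℕ => (0:ℝ)) Filter.atTop (nhds 0) := tendsto_const_nhds
    refine tendsto_of_tendsto_of_tendsto_of_le_of_le' hzero htend ?_ ?_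
    · filter_upwards [Filter.eventually_ge_atTop 1] with m hm
      exact (hpos m hm).le
    · filter_upwards [Filter.eventually_ge_atTop 2] with m hm
      exact hub m hm
  -- the constant
  refine ⟨1 + 2 * r * C / ε', by positivity, ?_⟩
  intro n hn
  have hn1 : (1:ℝ) ≤ (n:ℝ) := by exact_mod_cast hn
  have hn0 : (0:ℝ) < (n:ℝ) := lt_of_lt_of_le one_pos hn1
  have hψn : 0 < ψ n := hpos n hn
  set a : ℕ → ℝ := fun k => (ψ (n + k) - ψ (n + k + 1)) * ((n + k : ℕ) : ℝ) ^ r with ha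
  have hxk : ∀ k : ℕ, (1:ℝ) ≤ ((n + k : ℕ) : ℝ) := by
    intro k
    have : 1 ≤ n + k := le_trans hn (Nat.le_add_right _ _)
    exact_mod_cast this
  have hxk0 : ∀ k : ℕ, (0:ℝ) < ((n + k : ℕ) : ℝ) := fun k => lt_of_lt_of_le one_pos (hxk k)
  have hanneg : ∀ k, 0 ≤ a k := by
    intro k
    have h1 : ψ (n + k + 1) ≤ ψ (n + k) := hmono _ (le_trans hn (Nat.le_add_right _ _))
    have h2 : (0:ℝ) ≤ ((n + k : ℕ) : ℝ) ^ r := Real.rpow_nonneg (hxk0 k).le _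
    exact mul_nonneg (by linarith) h2
  set g : ℕ → ℝ := fun k => ψ (n + k) * ((n + k : ℕ) : ℝ) ^ r with hg
  set t : ℕ → ℝ := fun k => ψ (n + k + 1) * (((n + k + 1 : ℕ) : ℝ) ^ r - ((n + k : ℕ) : ℝ) ^ r)
    with ht
  set v : ℕ → ℝ := fun k => ((n + k : ℕ) : ℝ) ^ (-1 - ε') with hv
  set h : ℕ → ℝ := fun k => ((n + k : ℕ) : ℝ) ^ (-ε') with hh
  set D : ℝ := C * ((n:ℝ) ^ (r + ε') * ψ n) with hD
  have hD0 : 0 < D := by positivity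
  -- decomposition a k = (g k - g (k+1)) + t k
  have hdecomp : ∀ k, a k = (g k - g (k + 1)) + t k := by
    intro k
    simp only [ha, hg, ht]
    have : (n + (k + 1) : ℕ) = n + k + 1 := by ring
    rw [this]
    ring
  -- t k ≤ r * D * v k
  have htb : ∀ k, t k ≤ r * D * v k := by
    intro k
    have hx1 : (1:ℝ) ≤ ((n + k : ℕ) : ℝ) := hxk k
    have hx0 : (0:ℝ) < ((n + k : ℕ) : ℝ) := hxk0 k
    have hcast : ((n + k + 1 : ℕ) : ℝ) = ((n + k : ℕ) : ℝ) + 1 := by push_cast; ring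
    have hbu : ((n + k + 1 : ℕ) : ℝ) ^ r - ((n + k : ℕ) : ℝ) ^ r
        ≤ r * ((n + k : ℕ) : ℝ) ^ (r - 1) := by
      rw [hcast]
      have := bern_upper hx1 hr0.le hr1
      linarith
    have hψk1 : 0 < ψ (n + k + 1) := hpos _ (by omega)
    have step1 : t k ≤ ψ (n + k + 1) * (r * ((n + k : ℕ) : ℝ) ^ (r - 1)) :=
      mul_le_mul_of_nonneg_left hbu hψk1.le
    have step2 : ψ (n + k + 1) * ((n + k : ℕ) : ℝ) ^ (r - 1) ≤ D * v k := by
      have hsplit : ((n + k : ℕ) : ℝ) ^ (r - 1)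
          = ((n + k : ℕ) : ℝ) ^ (r + ε') * ((n + k : ℕ) : ℝ) ^ (-1 - ε') := by
        rw [← Real.rpow_add hx0]
        congr 1
        ring
      rcases Nat.eq_zero_or_pos k with hk0 | hk1
      · subst hk0
        have hψ1 : ψ (n + 0 + 1) ≤ ψ n := by
          have := hmono n hn
          simpa using this
        have hψnn : ψ (n + 0 + 1) * ((n + 0 : ℕ) : ℝ) ^ (r - 1) ≤ ψ n * ((n : ℕ) : ℝ) ^ (r - 1) := by
          simp only [Nat.add_zero]
          exact mul_le_mul_of_nonneg_right (by simpa using hψ1) (Real.rpow_nonneg hn0.le _)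
        have e : (n:ℝ) ^ (r + ε') * (n:ℝ) ^ (-1 - ε') = (n:ℝ) ^ (r - 1) := by
          rw [← Real.rpow_add hn0]
          congr 1
          ring
        have hDv : D * v 0 = C * (ψ n * ((n : ℕ) : ℝ) ^ (r - 1)) := by
          simp only [hD, hv, Nat.add_zero]
          rw [← e]
          ring
        have hnn2 : (0:ℝ) ≤ ψ n * ((n : ℕ) : ℝ) ^ (r - 1) :=
          mul_nonneg hψn.le (Real.rpow_nonneg hn0.le _)
        calc ψ (n + 0 + 1) * ((n + 0 : ℕ) : ℝ) ^ (r - 1)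
            ≤ ψ n * ((n : ℕ) : ℝ) ^ (r - 1) := hψnn
          _ ≤ C * (ψ n * ((n : ℕ) : ℝ) ^ (r - 1)) := le_mul_of_one_le_left hnn2 hC1
          _ = D * v 0 := hDv.symm
      · -- k ≥ 1 : use the almost-decreasing property
        have hψk : ψ (n + k + 1) ≤ ψ (n + k) := hmono _ (by omega)
        have halm2 : ((n + k : ℕ) : ℝ) ^ (r + ε') * ψ (n + k) ≤ C * ((n:ℝ) ^ (r + ε') * ψ n) :=
          halm' (n + k) n hn (by omega)
        calc ψ (n + k + 1) * ((n + k : ℕ) : ℝ) ^ (r - 1)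
            ≤ ψ (n + k) * ((n + k : ℕ) : ℝ) ^ (r - 1) :=
              mul_le_mul_of_nonneg_right hψk (Real.rpow_nonneg hx0.le _)
          _ = (((n + k : ℕ) : ℝ) ^ (r + ε') * ψ (n + k)) * v k := by
              rw [hsplit]; simp only [hv]; ring
          _ ≤ D * v k := by
              apply mul_le_mul_of_nonneg_right halm2 (Real.rpow_nonneg hx0.le _)
    calc t k ≤ ψ (n + k + 1) * (r * ((n + k : ℕ) : ℝ) ^ (r - 1)) := step1
      _ = r * (ψ (n + k + 1) * ((n + k : ℕ) : ℝ) ^ (r - 1)) := by ring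
      _ ≤ r * (D * v k) := mul_le_mul_of_nonneg_left step2 hr0.le
      _ = r * D * v k := by ring
  -- telescoping bound on sums of v
  have hvtel : ∀ k : ℕ, v (k + 1) ≤ (1 / ε') * (h k - h (k + 1)) := by
    intro k
    have hx1 : (1:ℝ) ≤ ((n + k : ℕ) : ℝ) := hxk k
    have hcast : ((n + (k + 1) : ℕ) : ℝ) = ((n + k : ℕ) : ℝ) + 1 := by push_cast; ring
    have hb := bern_lower hx1 hε'0 hε'1
    simp only [hv, hh, hcast]
    rw [one_div_mul_eq_div, le_div_iff₀ hε'0, mul_comm]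
    exact hb
  have hvsum : ∀ N : ℕ, ∑ k ∈ Finset.range N, v k ≤ v 0 + (1 / ε') * h 0 := by
    intro N
    have h1 : ∑ k ∈ Finset.range N, v k ≤ ∑ k ∈ Finset.range (N + 1), v k := by
      rw [Finset.sum_range_succ]
      have : (0:ℝ) ≤ v N := Real.rpow_nonneg (hxk0 N).le _
      linarith
    have h2 : ∑ k ∈ Finset.range (N + 1), v k = v 0 + ∑ k ∈ Finset.range N, v (k + 1) := by
      rw [Finset.sum_range_succ']
      ring
    have h3 : ∑ k ∈ Finset.range N, v (k + 1)
        ≤ ∑ k ∈ Finset.range N, (1 / ε') * (h k - h (k + 1)) :=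
      Finset.sum_le_sum fun k _ => hvtel k
    have h4 : ∑ k ∈ Finset.range N, (1 / ε') * (h k - h (k + 1)) = (1 / ε') * (h 0 - h N) := by
      rw [← Finset.mul_sum, Finset.sum_range_sub']
    have h5 : (0:ℝ) ≤ h N := Real.rpow_nonneg (hxk0 N).le _
    have h6 : (1 / ε') * (h 0 - h N) ≤ (1 / ε') * h 0 := by
      apply mul_le_mul_of_nonneg_left _ (by positivity)
      linarith
    linarith
  -- final bound on v 0 + (1/ε') * h 0
  have hvh : v 0 + (1 / ε') * h 0 ≤ (2 / ε') * (n:ℝ) ^ (-ε') := by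
    have hv0 : v 0 ≤ (n:ℝ) ^ (-ε') := by
      simp only [hv, Nat.add_zero]
      exact Real.rpow_le_rpow_of_exponent_le hn1 (by linarith)
    have hh0 : h 0 = (n:ℝ) ^ (-ε') := by simp [hh]
    have hle : (n:ℝ) ^ (-ε') ≤ (1 / ε') * (n:ℝ) ^ (-ε') := by
      have h1 : (1:ℝ) ≤ 1 / ε' := by
        rw [le_div_iff₀ hε'0]; linarith
      nlinarith [Real.rpow_nonneg hn0.le (-ε')]
    rw [hh0]
    have : (2 / ε') * (n:ℝ) ^ (-ε') = (1 / ε') * (n:ℝ) ^ (-ε') + (1 / ε') * (n:ℝ) ^ (-ε') := by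
      ring
    linarith
  -- partial sums bound
  have hg0 : g 0 = ψ n * (n:ℝ) ^ r := by simp [hg]
  have hSbound : ∀ N : ℕ, ∑ k ∈ Finset.range N, a k ≤ (1 + 2 * r * C / ε') * (ψ n * (n:ℝ) ^ r) := by
    intro N
    have hsa : ∑ k ∈ Finset.range N, a k
        = (g 0 - g N) + ∑ k ∈ Finset.range N, t k := by
      calc ∑ k ∈ Finset.range N, a k
          = ∑ k ∈ Finset.range N, ((g k - g (k + 1)) + t k) := by
            apply Finset.sum_congr rfl; intro k _; exact hdecomp k
        _ = ∑ k ∈ Finset.range N, (g k - g (k + 1)) + ∑ k ∈ Finset.range N, t k :=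
            Finset.sum_add_distrib
        _ = (g 0 - g N) + ∑ k ∈ Finset.range N, t k := by rw [Finset.sum_range_sub']
    have hgN : 0 ≤ g N := by
      have := hpos (n + N) (by omega)
      exact mul_nonneg this.le (Real.rpow_nonneg (hxk0 N).le _)
    have hts : ∑ k ∈ Finset.range N, t k ≤ r * D * (v 0 + (1 / ε') * h 0) := by
      calc ∑ k ∈ Finset.range N, t k ≤ ∑ k ∈ Finset.range N, r * D * v k :=
            Finset.sum_le_sum fun k _ => htb k
        _ = r * D * ∑ k ∈ Finset.range N, v k := by rw [← Finset.mul_sum]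
        _ ≤ r * D * (v 0 + (1 / ε') * h 0) := by
            apply mul_le_mul_of_nonneg_left (hvsum N) (by positivity)
    have hfinal : r * D * ((2 / ε') * (n:ℝ) ^ (-ε')) = (2 * r * C / ε') * (ψ n * (n:ℝ) ^ r) := by
      simp only [hD]
      rw [show (n:ℝ) ^ r = (n:ℝ) ^ (r + ε') * (n:ℝ) ^ (-ε') by
        rw [← Real.rpow_add hn0]; congr 1; ring]
      field_simp
    have h7 : r * D * (v 0 + (1 / ε') * h 0) ≤ (2 * r * C / ε') * (ψ n * (n:ℝ) ^ r) := by
      rw [← hfinal]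
      apply mul_le_mul_of_nonneg_left hvh (by positivity)
    calc ∑ k ∈ Finset.range N, a k = (g 0 - g N) + ∑ k ∈ Finset.range N, t k := hsa
      _ ≤ g 0 + (2 * r * C / ε') * (ψ n * (n:ℝ) ^ r) := by linarith
      _ = (1 + 2 * r * C / ε') * (ψ n * (n:ℝ) ^ r) := by rw [hg0]; ring
  have hsummable : Summable a := summable_of_sum_range_le hanneg hSbound
  refine ⟨hsummable, ?_, Real.tsum_le_of_sum_range_le hanneg hSbound⟩
  -- lower bound
  have hlow : ∀ N : ℕ, (ψ n - ψ (n + N)) * (n:ℝ) ^ r ≤ ∑' k, a k := by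
    intro N
    have h1 : ∀ k ∈ Finset.range N, (ψ (n + k) - ψ (n + k + 1)) * (n:ℝ) ^ r ≤ a k := by
      intro k _
      have hd : 0 ≤ ψ (n + k) - ψ (n + k + 1) := by
        have := hmono (n + k) (by omega)
        linarith
      have hxr : (n:ℝ) ^ r ≤ ((n + k : ℕ) : ℝ) ^ r := by
        apply Real.rpow_le_rpow hn0.le _ hr0.le
        exact_mod_cast Nat.le_add_right n k
      exact mul_le_mul_of_nonneg_left hxr hd
    have h2 : ∑ k ∈ Finset.range N, (ψ (n + k) - ψ (n + k + 1)) * (n:ℝ) ^ r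
        = (ψ n - ψ (n + N)) * (n:ℝ) ^ r := by
      rw [← Finset.sum_mul]
      congr 1
      exact Finset.sum_range_sub' (fun k => ψ (n + k)) N
    have h3 : ∑ k ∈ Finset.range N, a k ≤ ∑' k, a k :=
      Summable.sum_le_tsum _ (fun k _ => hanneg k) hsummable
    calc (ψ n - ψ (n + N)) * (n:ℝ) ^ r
        = ∑ k ∈ Finset.range N, (ψ (n + k) - ψ (n + k + 1)) * (n:ℝ) ^ r := h2.symm
      _ ≤ ∑ k ∈ Finset.range N, a k := Finset.sum_le_sum h1
      _ ≤ ∑' k, a k := h3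
  have htend : Filter.Tendsto (fun N : ℕ => (ψ n - ψ (n + N)) * (n:ℝ) ^ r)
      Filter.atTop (nhds (ψ n * (n:ℝ) ^ r)) := by
    have h1 : Filter.Tendsto (fun N : ℕ => ψ (n + N)) Filter.atTop (nhds 0) := by
      have := hψ0.comp (Filter.tendsto_add_atTop_nat n)
      simpa [Function.comp_def, Nat.add_comm] using this
    have hconst : Filter.Tendsto (fun _ : ℕ => ψ n) Filter.atTop (nhds (ψ n)) :=
      tendsto_const_nhds
    have h2 := (hconst.sub h1).mul_const ((n:ℝ) ^ r)
    simpa using h2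
  exact le_of_tendsto htend (Filter.Eventually.of_forall hlow)
end

section
/- Let r ∈ (0,1] and let ψ: ℕ → (0,∞) be nonincreasing with ψ(k) → 0 and Σ_{k=1}^∞ ψ(k)·k^{r−1} < ∞. Then for every n ∈ ℕ: Σ_{k=n}^∞ Δψ(k)·k^r ≤ r·Σ_{k=n}^∞ ψ(k)·k^{r−1} + ψ(n)·((n−1)^r + 1), where Δψ(k) = ψ(k) − ψ(k+1). -/
open Real

/-- Key pointwise inequality: for `x ≥ 1` and `0 < r ≤ 1`,
`(x+1)^r ≤ x^r + r * x^(r-1)`. -/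
lemma rpow_succ_le (r : ℝ) (hr0 : 0 < r) (hr1 : r ≤ 1) {x : ℝ} (hx : 1 ≤ x) :
    (x + 1) ^ r ≤ x ^ r + r * x ^ (r - 1) := by
  have hx0 : 0 < x := lt_of_lt_of_le one_pos hx
  have h1 : (1 + 1 / x) ^ r ≤ 1 + r * (1 / x) := by
    apply rpow_one_add_le_one_add_mul_self _ hr0.le hr1
    have : (0:ℝ) ≤ 1 / x := by positivity
    linarith
  have hxx : x + 1 = x * (1 + 1 / x) := by field_simp
  have h2 : (x + 1) ^ r = x ^ r * (1 + 1 / x) ^ r := by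
    rw [hxx, Real.mul_rpow hx0.le (by positivity)]
  have h3 : x ^ r * (1 + 1 / x) ^ r ≤ x ^ r * (1 + r * (1 / x)) := by
    apply mul_le_mul_of_nonneg_left h1 (Real.rpow_nonneg hx0.le r)
  have h4 : x ^ r * (1 + r * (1 / x)) = x ^ r + r * x ^ (r - 1) := by
    rw [Real.rpow_sub hx0, Real.rpow_one]
    field_simp
  calc (x + 1) ^ r = x ^ r * (1 + 1 / x) ^ r := h2
    _ ≤ x ^ r * (1 + r * (1 / x)) := h3
    _ = x ^ r + r * x ^ (r - 1) := h4

/-- Subadditivity consequence: `n^r ≤ (n-1)^r + 1` for `x = n - 1 ≥ 0`, `0 < r ≤ 1`. -/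
lemma rpow_le_sub_one_rpow_add_one (r : ℝ) (hr0 : 0 < r) (hr1 : r ≤ 1) {x : ℝ} (hx : 0 ≤ x) :
    (x + 1) ^ r ≤ x ^ r + 1 := by
  have := NNReal.rpow_add_le_add_rpow (Real.toNNReal x) 1 hr0.le hr1
  have h := NNReal.coe_le_coe.2 this
  push_cast at h
  rwa [Real.coe_toNNReal x hx, Real.one_rpow] at h

/-- Let `r ∈ (0,1]` and let `ψ : ℕ → (0,∞)` be nonincreasing with `ψ(k) → 0`
and `Σ_{k=1}^∞ ψ(k)·k^{r−1} < ∞`.  Then for every `n ≥ 1`: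
`Σ_{k=n}^∞ (ψ(k) − ψ(k+1))·k^r ≤ r·Σ_{k=n}^∞ ψ(k)·k^{r−1} + ψ(n)·((n−1)^r + 1)`. -/
theorem abel_tail_estimate (r : ℝ) (hr0 : 0 < r) (hr1 : r ≤ 1)
    (ψ : ℕ → ℝ) (hpos : ∀ k : ℕ, 1 ≤ k → 0 < ψ k)
    (hmono : ∀ k : ℕ, 1 ≤ k → ψ (k + 1) ≤ ψ k)
    (hlim : Filter.Tendsto ψ Filter.atTop (nhds 0))
    (hsum : Summable (fun k : ℕ => ψ (k + 1) * ((k + 1 : ℕ) : ℝ) ^ (r - 1))) :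
    ∀ n : ℕ, 1 ≤ n →
      Summable (fun k : ℕ => (ψ (n + k) - ψ (n + k + 1)) * ((n + k : ℕ) : ℝ) ^ r) ∧
      ∑' k : ℕ, (ψ (n + k) - ψ (n + k + 1)) * ((n + k : ℕ) : ℝ) ^ r ≤
        r * ∑' k : ℕ, ψ (n + k) * ((n + k : ℕ) : ℝ) ^ (r - 1) +
          ψ n * (((n : ℝ) - 1) ^ r + 1) := by
  intro n hn
  -- tail of ψ(k) k^{r-1}
  set t : ℕ → ℝ := fun k => ψ (n + k) * ((n + k : ℕ) : ℝ) ^ (r - 1) with ht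
  have htsum : Summable t := by
    have h := (summable_nat_add_iff (n - 1)).mpr hsum
    apply h.congr
    intro k
    have : k + (n - 1) + 1 = n + k := by omega
    simp only [this]
    rfl
  have htnonneg : ∀ k, 0 ≤ t k := by
    intro k
    have := hpos (n + k) (by omega)
    positivity
  -- the summand
  set a : ℕ → ℝ := fun k => (ψ (n + k) - ψ (n + k + 1)) * ((n + k : ℕ) : ℝ) ^ r with ha
  have hanonneg : ∀ k, 0 ≤ a k := by
    intro k
    have h1 := hmono (n + k) (by omega)
    have : (0:ℝ) ≤ ((n + k : ℕ) : ℝ) ^ r := Real.rpow_nonneg (by positivity) r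
    exact mul_nonneg (by linarith) this
  set b : ℕ → ℝ := fun k => ψ (n + k) * ((n + k : ℕ) : ℝ) ^ r with hb
  have hbnonneg : ∀ k, 0 ≤ b k := by
    intro k
    have := hpos (n + k) (by omega)
    positivity
  -- key induction: partial sums bound
  have key : ∀ m, ∑ k ∈ Finset.range m, a k + b m ≤ b 0 + r * ∑ k ∈ Finset.range m, t k := by
    intro m
    induction m with
    | zero => simp
    | succ m ih =>
      rw [Finset.sum_range_succ, Finset.sum_range_succ]
      have step : a m + b (m + 1) ≤ b m + r * t m := by
        have hx1 : (1:ℝ) ≤ ((n + m : ℕ) : ℝ) := by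
          have : 1 ≤ n + m := by omega
          exact_mod_cast this
        have hrp := rpow_succ_le r hr0 hr1 hx1
        have hcast : ((n + m + 1 : ℕ) : ℝ) = ((n + m : ℕ) : ℝ) + 1 := by push_cast; ring
        have hψ1 : 0 ≤ ψ (n + m + 1) := (hpos (n + m + 1) (by omega)).le
        have hψ2 : ψ (n + m + 1) ≤ ψ (n + m) := hmono (n + m) (by omega)
        have hpow_nonneg : (0:ℝ) ≤ ((n + m : ℕ) : ℝ) ^ (r - 1) :=
          Real.rpow_nonneg (by positivity) _
        have h5 : ψ (n + m + 1) * (((n + m : ℕ) : ℝ) + 1) ^ r ≤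
            ψ (n + m + 1) * (((n + m : ℕ) : ℝ) ^ r + r * ((n + m : ℕ) : ℝ) ^ (r - 1)) :=
          mul_le_mul_of_nonneg_left hrp hψ1
        have h6 : ψ (n + m + 1) * (r * ((n + m : ℕ) : ℝ) ^ (r - 1)) ≤
            ψ (n + m) * (r * ((n + m : ℕ) : ℝ) ^ (r - 1)) := by
          apply mul_le_mul_of_nonneg_right hψ2
          positivity
        simp only [ha, hb, ht]
        have hm1 : n + (m + 1) = n + m + 1 := by omega
        rw [hm1, hcast]
        nlinarith [h5, h6]
      linarith
  -- partial sums of a are bounded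
  set C : ℝ := r * ∑' k, t k + ψ n * (((n : ℝ) - 1) ^ r + 1) with hC
  have hb0 : b 0 ≤ ψ n * (((n : ℝ) - 1) ^ r + 1) := by
    have hx : (0:ℝ) ≤ (n : ℝ) - 1 := by
      have : 1 ≤ (n:ℝ) := by exact_mod_cast hn
      linarith
    have h := rpow_le_sub_one_rpow_add_one r hr0 hr1 hx
    have hcast : ((n : ℝ) - 1) + 1 = ((n + 0 : ℕ) : ℝ) := by push_cast; ring
    rw [hcast] at h
    simp only [hb]
    have := (hpos n hn).le
    exact mul_le_mul_of_nonneg_left h this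
  have hbound : ∀ m, ∑ k ∈ Finset.range m, a k ≤ C := by
    intro m
    have h1 := key m
    have h2 : ∑ k ∈ Finset.range m, t k ≤ ∑' k, t k :=
      Summable.sum_le_tsum _ (fun k _ => htnonneg k) htsum
    have h3 : 0 ≤ b m := hbnonneg m
    have : r * ∑ k ∈ Finset.range m, t k ≤ r * ∑' k, t k :=
      mul_le_mul_of_nonneg_left h2 hr0.le
    rw [hC]
    linarith
  have hsa : Summable a := summable_of_sum_range_le hanonneg hbound
  refine ⟨hsa, ?_⟩
  have := tsum_le_of_sum_range_le hanonneg hbound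
  rw [hC] at this
  exact this
end

section
/- Let 1 ≤ p < ∞ and 1/p + 1/p' = 1. There exists a constant K > 0, depending only on p, such that for every k ∈ ℕ and every β ∈ ℝ: ‖D_{k,β}‖_{p'} ≤ K·k^{1/p}, where for p' < ∞ the norm is ‖f‖_{p'} = (∫_{−π}^{π} |f(t)|^{p'} dt)^{1/p'} and for p' = ∞ (i.e., p = 1) it is the sup norm over [−π,π]. -/
open Real Finset MeasureTheory ENNReal

lemma sum_shift (k : ℕ) (g : ℕ → ℝ) :
    ∑ ν ∈ Finset.Icc 1 k, g ν = ∑ i ∈ Finset.range k, g (i + 1) := by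
  induction k with
  | zero => simp
  | succ n ih => rw [Finset.sum_Icc_succ_top (by omega), ih, Finset.sum_range_succ]

lemma sum_cos_mul (k : ℕ) (c t : ℝ) :
    2 * Real.sin (t / 2) * ∑ ν ∈ Finset.Icc 1 k, Real.cos ((ν : ℝ) * t - c)
      = Real.sin (((k : ℝ) + 1 / 2) * t - c) - Real.sin ((1 / 2) * t - c) := by
  have key : ∀ i : ℕ,
      Real.sin ((((i : ℝ) + 1) + 1 / 2) * t - c) - Real.sin (((i : ℝ) + 1 / 2) * t - c)
        = 2 * Real.sin (t / 2) * Real.cos (((i : ℝ) + 1) * t - c) := by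
    intro i
    have h1 : (((((i : ℝ) + 1) + 1 / 2) * t - c) - (((i : ℝ) + 1 / 2) * t - c)) / 2 = t / 2 := by
      ring
    have h2 : (((((i : ℝ) + 1) + 1 / 2) * t - c) + (((i : ℝ) + 1 / 2) * t - c)) / 2
        = ((i : ℝ) + 1) * t - c := by ring
    rw [Real.sin_sub_sin, h1, h2]
  rw [Finset.mul_sum, sum_shift k fun ν => 2 * Real.sin (t / 2) * Real.cos ((ν : ℝ) * t - c)]
  have h3 : ∀ i ∈ Finset.range k,
      2 * Real.sin (t / 2) * Real.cos (((i + 1 : ℕ) : ℝ) * t - c)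
        = (fun n : ℕ => Real.sin (((n : ℝ) + 1 / 2) * t - c)) (i + 1)
          - (fun n : ℕ => Real.sin (((n : ℝ) + 1 / 2) * t - c)) i := by
    intro i _
    simp only [Nat.cast_add, Nat.cast_one]
    rw [← key i]
  rw [Finset.sum_congr rfl h3,
    Finset.sum_range_sub (fun n : ℕ => Real.sin (((n : ℝ) + 1 / 2) * t - c)) k]
  norm_num

lemma abs_sum_cos_le (k : ℕ) (c t : ℝ) (h : Real.sin (t / 2) ≠ 0) :
    |∑ ν ∈ Finset.Icc 1 k, Real.cos ((ν : ℝ) * t - c)| ≤ 1 / |Real.sin (t / 2)| := by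
  have hs : 0 < |Real.sin (t / 2)| := abs_pos.2 h
  have h2 : |2 * Real.sin (t / 2) * ∑ ν ∈ Finset.Icc 1 k, Real.cos ((ν : ℝ) * t - c)| ≤ 2 := by
    rw [sum_cos_mul]
    have := Real.abs_sin_le_one ((((k : ℝ) + 1 / 2) * t - c))
    have := Real.abs_sin_le_one ((1 / 2) * t - c)
    calc |Real.sin (((k : ℝ) + 1 / 2) * t - c) - Real.sin ((1 / 2) * t - c)|
        ≤ |Real.sin (((k : ℝ) + 1 / 2) * t - c)| + |Real.sin ((1 / 2) * t - c)| := abs_sub _ _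
      _ ≤ 2 := by linarith
  rw [abs_mul, abs_mul, abs_two] at h2
  rw [le_div_iff₀ hs]
  nlinarith [abs_nonneg (∑ ν ∈ Finset.Icc 1 k, Real.cos ((ν : ℝ) * t - c))]

/-- The modified Dirichlet kernel `D_{k,β}(t) = (1/2)cos(βπ/2) + Σ_{ν=1}^{k} cos(νt − βπ/2)`. -/
noncomputable def dirichletBeta (k : ℕ) (β t : ℝ) : ℝ :=
  (1 / 2) * Real.cos (β * π / 2) + ∑ ν ∈ Finset.Icc 1 k, Real.cos ((ν : ℝ) * t - β * π / 2)

lemma abs_dirichletBeta_le (k : ℕ) (β t : ℝ) : |dirichletBeta k β t| ≤ (k : ℝ) + 1 / 2 := by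
  unfold dirichletBeta
  refine (abs_add_le _ _).trans ?_
  have h1 : |(1 / 2 : ℝ) * Real.cos (β * π / 2)| ≤ 1 / 2 := by
    rw [abs_mul]
    have := Real.abs_cos_le_one (β * π / 2)
    rw [abs_of_nonneg (by norm_num : (0:ℝ) ≤ 1/2)]
    nlinarith [abs_nonneg (Real.cos (β * π / 2))]
  have h2 : |∑ ν ∈ Finset.Icc 1 k, Real.cos ((ν : ℝ) * t - β * π / 2)| ≤ (k : ℝ) := by
    refine (Finset.abs_sum_le_sum_abs _ _).trans ?_
    calc ∑ ν ∈ Finset.Icc 1 k, |Real.cos ((ν : ℝ) * t - β * π / 2)|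
        ≤ ∑ _ν ∈ Finset.Icc 1 k, (1 : ℝ) :=
          Finset.sum_le_sum fun i _ => Real.abs_cos_le_one _
      _ = (k : ℝ) := by simp
  linarith

lemma abs_dirichletBeta_le' (k : ℕ) (β t : ℝ) (ht : t ∈ Set.Ioc (-π) π) (ht0 : t ≠ 0) :
    |dirichletBeta k β t| ≤ 5 / |t| := by
  have h0 : 0 < |t| := abs_pos.2 ht0
  have htpi : |t| ≤ π := abs_le.2 ⟨ht.1.le, ht.2⟩
  have habs : |Real.sin (t / 2)| = Real.sin (|t| / 2) := by
    rcases le_or_gt 0 t with h | h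
    · rw [abs_of_nonneg h, abs_of_nonneg (Real.sin_nonneg_of_nonneg_of_le_pi (by linarith)
        (by rw [abs_of_nonneg h] at htpi; linarith [Real.pi_pos]))]
    · rw [abs_of_neg h, show -t / 2 = -(t / 2) by ring, Real.sin_neg, abs_of_nonpos]
      exact Real.sin_nonpos_of_nonpos_of_neg_pi_le (by linarith)
        (by rw [abs_of_neg h] at htpi; linarith)
  have hge : |t| / π ≤ |Real.sin (t / 2)| := by
    rw [habs]
    have := Real.mul_le_sin (x := |t| / 2) (by positivity) (by linarith)
    calc |t| / π = 2 / π * (|t| / 2) := by field_simp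
      _ ≤ Real.sin (|t| / 2) := this
  have hspos : 0 < |Real.sin (t / 2)| := lt_of_lt_of_le (by positivity) hge
  have hsne : Real.sin (t / 2) ≠ 0 := fun hh => by simp [hh] at hspos
  have hsum := abs_sum_cos_le k (β * π / 2) t hsne
  have hsum2 : |∑ ν ∈ Finset.Icc 1 k, Real.cos ((ν : ℝ) * t - β * π / 2)| ≤ π / |t| := by
    refine hsum.trans ?_
    rw [div_le_div_iff₀ hspos h0]
    calc 1 * |t| = |t| := one_mul _
      _ = π * (|t| / π) := by field_simp
      _ ≤ π * |Real.sin (t / 2)| := by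
          exact mul_le_mul_of_nonneg_left hge Real.pi_pos.le
  have h1 : |(1 / 2 : ℝ) * Real.cos (β * π / 2)| ≤ 1 / 2 := by
    rw [abs_mul, abs_of_nonneg (by norm_num : (0:ℝ) ≤ 1/2)]
    nlinarith [Real.abs_cos_le_one (β * π / 2), abs_nonneg (Real.cos (β * π / 2))]
  have key : |dirichletBeta k β t| ≤ 1 / 2 + π / |t| := by
    unfold dirichletBeta
    refine (abs_add_le _ _).trans ?_
    linarith
  refine key.trans ?_
  rw [← sub_nonneg]
  have hpi : π < 3.15 := Real.pi_lt_d2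
  have : 5 / |t| - (1 / 2 + π / |t|) = ((5 - π) - |t| / 2) / |t| := by field_simp; ring
  rw [this]
  apply div_nonneg _ h0.le
  nlinarith


lemma integrableOn_side {r a b : ℝ} (hr : 0 ≤ r) (h : ∀ x ∈ Set.Icc a b, x ≠ 0) :
    IntegrableOn (fun x => (5 / |x|) ^ r) (Set.Ioc a b) := by
  have c1 : ContinuousOn (fun x : ℝ => 5 / |x|) (Set.Icc a b) :=
    continuousOn_const.div continuous_abs.continuousOn
      (fun x hx => by simpa using h x hx)
  exact (c1.rpow_const fun x hx => Or.inr hr).integrableOn_Icc.mono_set Set.Ioc_subset_Icc_self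

lemma side_integral {r ε : ℝ} (hr : 1 < r) (hε : 0 < ε) (hεπ : ε ≤ π) :
    ∫ x in Set.Ioc ε π, (5 / |x|) ^ r ≤ 5 ^ r * (r - 1)⁻¹ * ε ^ (1 - r) := by
  have hcongr : ∫ x in Set.Ioc ε π, (5 / |x|) ^ r = ∫ x in Set.Ioc ε π, 5 ^ r * x ^ (-r) := by
    refine setIntegral_congr_fun measurableSet_Ioc fun x hx => ?_
    have hx0 : 0 < x := lt_of_lt_of_le hε hx.1.le
    rw [abs_of_pos hx0, Real.div_rpow (by norm_num) hx0.le, Real.rpow_neg hx0.le, div_eq_mul_inv]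
  rw [hcongr, MeasureTheory.integral_const_mul, ← intervalIntegral.integral_of_le hεπ,
    integral_rpow (Or.inr ⟨by linarith, fun h => by
      rcases Set.mem_uIcc.1 h with ⟨h1, _⟩ | ⟨_, h2⟩ <;> linarith [Real.pi_pos]⟩)]
  have h5 : (0:ℝ) < 5 ^ r := Real.rpow_pos_of_pos (by norm_num) r
  have hπ : (0:ℝ) < π ^ (-r + 1) := Real.rpow_pos_of_pos Real.pi_pos _
  have hεr : ε ^ (-r + 1) = ε ^ (1 - r) := by ring_nf
  have : (π ^ (-r + 1) - ε ^ (-r + 1)) / (-r + 1) ≤ (r - 1)⁻¹ * ε ^ (1 - r) := by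
    set u := ε ^ (-r + 1) with hu
    set v := π ^ (-r + 1) with hv
    have hr1 : (0:ℝ) < r - 1 := by linarith
    have heq : (v - u) / (-r + 1) = (u - v) * (r - 1)⁻¹ := by
      rw [show (-r + 1) = -(r - 1) by ring, div_neg, div_eq_mul_inv, ← neg_mul, neg_sub]
    rw [heq, ← hεr]
    have hinv : (0:ℝ) < (r - 1)⁻¹ := by positivity
    nlinarith
  calc 5 ^ r * ((π ^ (-r + 1) - ε ^ (-r + 1)) / (-r + 1))
      ≤ 5 ^ r * ((r - 1)⁻¹ * ε ^ (1 - r)) := by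
        exact mul_le_mul_of_nonneg_left this h5.le
    _ = 5 ^ r * (r - 1)⁻¹ * ε ^ (1 - r) := by ring

lemma neg_side (r ε : ℝ) (hε : 0 < ε) (hεπ : ε ≤ π) :
    ∫ x in Set.Ioc (-π) (-ε), (5 / |x|) ^ r = ∫ x in Set.Ioc ε π, (5 / |x|) ^ r := by
  rw [← intervalIntegral.integral_of_le (by linarith), ← intervalIntegral.integral_of_le hεπ]
  have := intervalIntegral.integral_comp_neg (a := ε) (b := π) (fun x => (5 / |x|) ^ r)
  simp only [abs_neg] at this
  rw [← this]

/-- The `L_q` norm (`q ∈ [1,∞]`, as an extended real exponent) of a function over one period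
`(−π, π]`; for finite `q` this is `(∫_{−π}^{π} |f|^q)^{1/q}`, for `q = ∞` the essential
supremum of `|f|` over the period. -/
noncomputable def qnorm (q : ℝ≥0∞) (f : ℝ → ℝ) : ℝ :=
  (eLpNorm f q (volume.restrict (Set.Ioc (-π) π))).toReal

/-- Let `1 ≤ p < ∞` and `1/p + 1/p' = 1` (so `p' = ∞` when `p = 1`).  There is a
constant `K > 0` depending only on `p` such that for every `k ≥ 1` and every `β ∈ ℝ`:
`‖D_{k,β}‖_{p'} ≤ K·k^{1/p}`. -/
theorem dirichletBeta_norm_bound (p : ℝ) (hp : 1 ≤ p) (p' : ℝ≥0∞)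
    (hpp' : 1 / ENNReal.ofReal p + 1 / p' = 1) :
    ∃ K : ℝ, 0 < K ∧ ∀ k : ℕ, 1 ≤ k → ∀ β : ℝ,
      qnorm p' (fun t => dirichletBeta k β t) ≤ K * (k : ℝ) ^ (1 / p) := by
  have hppos : 0 < p := lt_of_lt_of_le one_pos hp
  by_cases hp' : p' = ⊤
  · -- p = 1, sup-norm case
    have h1 : 1 / ENNReal.ofReal p = 1 := by simpa [hp'] using hpp'
    have hop : ENNReal.ofReal p = 1 := by
      rw [one_div] at h1
      rw [← inv_inv (ENNReal.ofReal p), h1, inv_one]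
    have hp1 : p = 1 := by
      have h2 := congrArg ENNReal.toReal hop
      rwa [ENNReal.toReal_ofReal hppos.le, ENNReal.toReal_one] at h2
    subst hp1
    refine ⟨2, by norm_num, fun k hk β => ?_⟩
    have hk1 : (1 : ℝ) ≤ (k : ℝ) := by exact_mod_cast hk
    have hb : ∀ᵐ x ∂(volume.restrict (Set.Ioc (-π) π)),
        ‖dirichletBeta k β x‖ ≤ (k : ℝ) + 1 / 2 :=
      ae_of_all _ fun x => by rw [Real.norm_eq_abs]; exact abs_dirichletBeta_le k β x
    have hle := eLpNormEssSup_le_of_ae_bound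
      (μ := volume.restrict (Set.Ioc (-π) π)) (f := fun t => dirichletBeta k β t) hb
    unfold qnorm
    rw [hp', eLpNorm_exponent_top]
    refine ENNReal.toReal_le_of_le_ofReal (by positivity) (hle.trans ?_)
    refine ENNReal.ofReal_le_ofReal ?_
    rw [show (1 : ℝ) / 1 = 1 by norm_num, Real.rpow_one]
    linarith
  · -- 1 < p, finite p'
    have hp1 : 1 < p := by
      rcases eq_or_lt_of_le hp with h | h
      · exfalso
        have h0 : 1 / p' = 0 := by
          have hx := hpp'
          rw [← h, ENNReal.ofReal_one] at hx
          have hx2 : (1 : ℝ≥0∞) + 1 / p' = 1 + 0 := by simpa using hx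
          exact (ENNReal.add_right_inj ENNReal.one_ne_top).mp hx2
        rw [one_div, ENNReal.inv_eq_zero] at h0
        exact hp' h0
      · exact h
    set s : ℝ := 1 - p⁻¹ with hs_def
    have hps : 0 < p⁻¹ := by positivity
    have hps1 : p⁻¹ < 1 := by rw [inv_lt_one_iff₀]; right; exact hp1
    have hs : 0 < s := by simp only [hs_def]; linarith
    have hs1 : s < 1 := by simp only [hs_def]; linarith
    have hob : ENNReal.ofReal p ≠ 0 := by
      simp only [Ne, ENNReal.ofReal_eq_zero, not_le]; exact hppos
    have hinvp' : 1 / p' = ENNReal.ofReal s := by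
      have h1 : 1 / p' = 1 - 1 / ENNReal.ofReal p := by
        refine ENNReal.eq_sub_of_add_eq ?_ ?_
        · rw [one_div]; exact ENNReal.inv_ne_top.2 hob
        · rw [add_comm] at hpp'; exact hpp'
      rw [h1, one_div, ← ENNReal.ofReal_inv_of_pos hppos, ← ENNReal.ofReal_one,
        ← ENNReal.ofReal_sub _ (by positivity)]
    have hp'eq : p' = ENNReal.ofReal s⁻¹ := by
      have h2 : p'⁻¹ = ENNReal.ofReal s := by rwa [one_div] at hinvp'
      rw [← inv_inv p', h2, ← ENNReal.ofReal_inv_of_pos hs]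
    set r : ℝ := s⁻¹ with hr_def
    have hrpos : 0 < r := by positivity
    have hr1 : 1 < r := (one_lt_inv₀ hs).mpr hs1
    have hrtR : p'.toReal = r := by rw [hp'eq, ENNReal.toReal_ofReal hrpos.le]
    have hp'ne0 : p' ≠ 0 := by
      rw [hp'eq]
      simp only [Ne, ENNReal.ofReal_eq_zero, not_le]
      exact hrpos
    have hrp : (r - 1) * (1 / r) = 1 / p := by
      have hr0 : r ≠ 0 := hrpos.ne'
      have hsr : r⁻¹ = s := by rw [hr_def, inv_inv]
      have : (r - 1) * (1 / r) = 1 - r⁻¹ := by field_simp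
      rw [this, hsr, hs_def, one_div]
      ring
    set S : ℝ := 2 ^ (r + 1) + 2 * (5 ^ r * (r - 1)⁻¹) with hS_def
    have h2r : (0:ℝ) < 2 ^ (r + 1) := Real.rpow_pos_of_pos (by norm_num) _
    have h5r : (0:ℝ) < 5 ^ r := Real.rpow_pos_of_pos (by norm_num) _
    have hrm1 : (0:ℝ) < (r - 1)⁻¹ := by rw [inv_pos]; linarith
    have hS : 0 < S := by
      have := mul_pos h5r hrm1
      simp only [hS_def]; nlinarith
    refine ⟨S ^ (1 / r), Real.rpow_pos_of_pos hS _, fun k hk β => ?_⟩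
    have hk1 : (1 : ℝ) ≤ (k : ℝ) := by exact_mod_cast hk
    have hk0 : (0 : ℝ) < (k : ℝ) := by linarith
    set ε : ℝ := ((k : ℝ))⁻¹ with hε_def
    have hε : 0 < ε := by positivity
    have hε1 : ε ≤ 1 := by rw [hε_def]; exact inv_le_one_of_one_le₀ hk1
    have hπ3 : (3 : ℝ) < π := Real.pi_gt_three
    have hεπ : ε ≤ π := by linarith
    set f : ℝ → ℝ := fun t => dirichletBeta k β t with hf_def
    have hcoe : ∀ x : ℝ, (‖f x‖₊ : ℝ≥0∞) = ENNReal.ofReal |f x| := fun x => by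
      rw [← Real.norm_eq_abs, ← coe_nnnorm, ENNReal.ofReal_coe_nnreal]
    -- the three pieces
    set A : Set ℝ := Set.Ioc (-π) (-ε) with hA_def
    set B : Set ℝ := Set.Ioc (-ε) ε with hB_def
    set C : Set ℝ := Set.Ioc ε π with hC_def
    have hsets : Set.Ioc (-π) π = A ∪ (B ∪ C) := by
      rw [hA_def, hB_def, hC_def, Set.Ioc_union_Ioc_eq_Ioc (by linarith) hεπ,
        Set.Ioc_union_Ioc_eq_Ioc (by linarith) (by linarith)]
    have hdis2 : Disjoint B C := by
      rw [Set.disjoint_left]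
      rintro x hx hx'
      exact absurd hx.2 (not_le.2 hx'.1)
    have hdis1 : Disjoint A (B ∪ C) := by
      rw [Set.disjoint_left]
      rintro x hx (h | h)
      · exact absurd hx.2 (not_le.2 h.1)
      · have := hx.2; have := h.1; linarith
    -- middle bound
    have hmid : ∫⁻ x in B, (‖f x‖₊ : ℝ≥0∞) ^ r ≤
        ENNReal.ofReal (2 ^ (r + 1) * (k : ℝ) ^ (r - 1)) := by
      have hpt : ∀ x ∈ B, (‖f x‖₊ : ℝ≥0∞) ^ r ≤ ENNReal.ofReal ((2 * (k : ℝ)) ^ r) := by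
        intro x _
        rw [hcoe x, ENNReal.ofReal_rpow_of_nonneg (abs_nonneg _) hrpos.le]
        refine ENNReal.ofReal_le_ofReal (Real.rpow_le_rpow (abs_nonneg _) ?_ hrpos.le)
        have := abs_dirichletBeta_le k β x
        rw [hf_def]; linarith
      have hvol : volume B = ENNReal.ofReal (2 * ε) := by
        rw [hB_def, Real.volume_Ioc]
        congr 1; ring
      calc ∫⁻ x in B, (‖f x‖₊ : ℝ≥0∞) ^ r
          ≤ ∫⁻ _x in B, ENNReal.ofReal ((2 * (k : ℝ)) ^ r) :=
            setLIntegral_mono' measurableSet_Ioc hpt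
        _ = ENNReal.ofReal ((2 * (k : ℝ)) ^ r) * volume B := setLIntegral_const _ _
        _ = ENNReal.ofReal ((2 * (k : ℝ)) ^ r * (2 * ε)) := by
            rw [hvol, ← ENNReal.ofReal_mul (by positivity)]
        _ = ENNReal.ofReal (2 ^ (r + 1) * (k : ℝ) ^ (r - 1)) := by
            congr 1
            rw [Real.mul_rpow (by norm_num) hk0.le, Real.rpow_add two_pos, Real.rpow_one,
              Real.rpow_sub hk0, Real.rpow_one, hε_def]
            field_simp
    -- side bounds
    have hεpow : ε ^ (1 - r) = (k : ℝ) ^ (r - 1) := by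
      rw [hε_def, Real.inv_rpow hk0.le, ← Real.rpow_neg hk0.le, neg_sub]
    have hsidebound : ∫ x in C, (5 / |x|) ^ r ≤ 5 ^ r * (r - 1)⁻¹ * (k : ℝ) ^ (r - 1) := by
      rw [← hεpow]; exact side_integral hr1 hε hεπ
    have hptside : ∀ x ∈ Set.Ioc (-π) π, x ≠ 0 →
        (‖f x‖₊ : ℝ≥0∞) ^ r ≤ ENNReal.ofReal ((5 / |x|) ^ r) := by
      intro x hx hx0
      rw [hcoe x, ENNReal.ofReal_rpow_of_nonneg (abs_nonneg _) hrpos.le]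
      exact ENNReal.ofReal_le_ofReal
        (Real.rpow_le_rpow (abs_nonneg _) (abs_dirichletBeta_le' k β x hx hx0) hrpos.le)
    have hsideC : ∫⁻ x in C, (‖f x‖₊ : ℝ≥0∞) ^ r ≤
        ENNReal.ofReal (5 ^ r * (r - 1)⁻¹ * (k : ℝ) ^ (r - 1)) := by
      calc ∫⁻ x in C, (‖f x‖₊ : ℝ≥0∞) ^ r
          ≤ ∫⁻ x in C, ENNReal.ofReal ((5 / |x|) ^ r) := by
            refine setLIntegral_mono' measurableSet_Ioc fun x hx => ?_
            have h1 := hx.1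
            exact hptside x ⟨by linarith, hx.2⟩ (fun h => by rw [h] at h1; linarith)
        _ = ENNReal.ofReal (∫ x in C, (5 / |x|) ^ r) := by
            rw [ofReal_integral_eq_lintegral_ofReal
              (integrableOn_side hrpos.le fun x hx => by
                have := hx.1; intro h; rw [h] at this; linarith)
              (ae_of_all _ fun x => by positivity)]
        _ ≤ _ := ENNReal.ofReal_le_ofReal hsidebound
    have hsideA : ∫⁻ x in A, (‖f x‖₊ : ℝ≥0∞) ^ r ≤
        ENNReal.ofReal (5 ^ r * (r - 1)⁻¹ * (k : ℝ) ^ (r - 1)) := by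
      calc ∫⁻ x in A, (‖f x‖₊ : ℝ≥0∞) ^ r
          ≤ ∫⁻ x in A, ENNReal.ofReal ((5 / |x|) ^ r) := by
            refine setLIntegral_mono' measurableSet_Ioc fun x hx => ?_
            refine hptside x ⟨hx.1, by linarith [hx.2]⟩ ?_
            have := hx.2; intro h; rw [h] at this; linarith
        _ = ENNReal.ofReal (∫ x in A, (5 / |x|) ^ r) := by
            rw [ofReal_integral_eq_lintegral_ofReal
              (integrableOn_side hrpos.le fun x hx => by
                have := hx.2; intro h; rw [h] at this; linarith)
              (ae_of_all _ fun x => by positivity)]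
        _ ≤ _ := by
            rw [hA_def, neg_side r ε hε hεπ]
            exact ENNReal.ofReal_le_ofReal hsidebound
    -- total
    have htotal : ∫⁻ x in Set.Ioc (-π) π, (‖f x‖₊ : ℝ≥0∞) ^ r ≤
        ENNReal.ofReal (S * (k : ℝ) ^ (r - 1)) := by
      rw [hsets, lintegral_union (measurableSet_Ioc.union measurableSet_Ioc) hdis1,
        lintegral_union measurableSet_Ioc hdis2]
      have hkr : (0:ℝ) ≤ (k : ℝ) ^ (r - 1) := (Real.rpow_pos_of_pos hk0 _).le
      calc _ ≤ ENNReal.ofReal (5 ^ r * (r - 1)⁻¹ * (k : ℝ) ^ (r - 1)) +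
            (ENNReal.ofReal (2 ^ (r + 1) * (k : ℝ) ^ (r - 1)) +
             ENNReal.ofReal (5 ^ r * (r - 1)⁻¹ * (k : ℝ) ^ (r - 1))) :=
          add_le_add hsideA (add_le_add hmid hsideC)
        _ = ENNReal.ofReal (S * (k : ℝ) ^ (r - 1)) := by
            rw [← ENNReal.ofReal_add (by positivity) (by positivity),
              ← ENNReal.ofReal_add (by positivity) (by positivity)]
            congr 1
            rw [hS_def]; ring
    -- conclude
    unfold qnorm
    refine ENNReal.toReal_le_of_le_ofReal (by positivity) ?_
    rw [eLpNorm_eq_lintegral_rpow_enorm_toReal hp'ne0 hp', hrtR]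
    have hfinal : (ENNReal.ofReal (S * (k : ℝ) ^ (r - 1))) ^ (1 / r) =
        ENNReal.ofReal (S ^ (1 / r) * (k : ℝ) ^ (1 / p)) := by
      have hSk : (0:ℝ) < S * (k : ℝ) ^ (r - 1) :=
        mul_pos hS (Real.rpow_pos_of_pos hk0 _)
      rw [ENNReal.ofReal_rpow_of_pos hSk]
      congr 1
      rw [Real.mul_rpow hS.le (Real.rpow_pos_of_pos hk0 _).le,
        ← Real.rpow_mul hk0.le, hrp]
    rw [← hfinal]
    exact ENNReal.rpow_le_rpow htotal (by positivity)
end
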